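/- (Corollary 4.4, exact form) For every n ≥ 0, the total mid-height of all symmetric Dyck paths of length 2n, namely ∑_{k=0}^{n} k · d_{n,k}, equals 2^n − C(n, ⌊n/2⌋). In particular it equals 2^{2m} − C(2m,m) when n = 2m and 2^{2m+1} − C(2m+1,m) when n = 2m+1. -/

import Mathlib

/-- The ballot numbers `d_{n,k} = ((k+1)/(n+1)) * C(n+1, (n-k)/2)` when `k ≤ n` and
`n ≡ k (mod 2)`, and `0` otherwise. -/
def dnk (n k : ℕ) : ℕ :=
  if k ≤ n ∧ (n - k) % 2 = 0 then (k + 1) * Nat.choose (n + 1) ((n - k) / 2) / (n + 1)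
  else 0

open Finset

/-- Telescoping (Abel summation) identity over ℤ. -/
lemma telescope_aux (a : ℤ) (c : ℕ → ℤ) (M : ℕ) :
    a * c 0 + ∑ j ∈ range M, (a - 2 * ((j : ℤ) + 1)) * (c (j + 1) - c j)
      = (a - 2 * M) * c M + 2 * ∑ j ∈ range M, c j := by
  induction M with
  | zero => simp
  | succ M ih =>
      rw [Finset.sum_range_succ, Finset.sum_range_succ (f := c), ← add_assoc, ih]
      push_cast
      ring

/-- Even halfway binomial sum: `2·∑_{j<m} C(2m,j) + C(2m,m) = 2^(2m)`. -/
lemma even_halfway (m : ℕ) :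
    2 * ∑ j ∈ range m, (2 * m).choose j + (2 * m).choose m = 2 ^ (2 * m) := by
  have h := Nat.sum_range_choose (2 * m)
  have hsplit : ∑ i ∈ Ico 0 (m + 1), (2 * m).choose i
      + ∑ i ∈ Ico (m + 1) (2 * m + 1), (2 * m).choose i
      = ∑ i ∈ Ico 0 (2 * m + 1), (2 * m).choose i :=
    Finset.sum_Ico_consecutive _ (by omega) (by omega)
  rw [← Finset.range_eq_Ico, ← Finset.range_eq_Ico] at hsplit
  rw [← hsplit, Finset.sum_range_succ] at h
  have h2 : ∑ i ∈ Ico (m + 1) (2 * m + 1), (2 * m).choose i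
      = ∑ j ∈ range m, (2 * m).choose j := by
    rw [Finset.sum_Ico_eq_sum_range]
    have hm : 2 * m + 1 - (m + 1) = m := by omega
    rw [hm]
    have hc : ∀ j ∈ range m, (2 * m).choose (m + 1 + j) = (2 * m).choose (m - 1 - j) := by
      intro j hj
      rw [Finset.mem_range] at hj
      have h1 : m + 1 + j ≤ 2 * m := by omega
      have hs := Nat.choose_symm h1
      have he : 2 * m - (m + 1 + j) = m - 1 - j := by omega
      rw [he] at hs
      exact hs.symm
    rw [Finset.sum_congr rfl hc, Finset.sum_range_reflect]
  rw [h2] at h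
  omega

lemma dnk_self (n : ℕ) : dnk n n = 1 := by
  simp [dnk, Nat.div_self (Nat.succ_pos n)]

/-- Key ballot-number identity in additive form. -/
lemma ballot_key (n j : ℕ) (h : 2 * (j + 1) ≤ n) :
    (n - 2 * (j + 1) + 1) * (n + 1).choose (j + 1) + (n + 1) * n.choose j
      = (n + 1) * n.choose (j + 1) := by
  obtain ⟨t, ht⟩ : ∃ t, n = t + 2 * j + 2 := ⟨n - (2 * j + 2), by omega⟩
  subst ht
  have hid := Nat.choose_succ_right_eq (t + 2 * j + 2) j
  have hnj : t + 2 * j + 2 - j = t + j + 2 := by omega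
  rw [hnj] at hid
  have hsub : t + 2 * j + 2 - 2 * (j + 1) + 1 = t + 1 := by omega
  rw [hsub, Nat.choose_succ_succ]
  zify at hid ⊢
  linear_combination (-2 : ℤ) * hid

lemma dnk_val (n j : ℕ) (h : 2 * (j + 1) ≤ n) :
    dnk n (n - 2 * (j + 1)) = n.choose (j + 1) - n.choose j := by
  have hcond : n - 2 * (j + 1) ≤ n ∧ (n - (n - 2 * (j + 1))) % 2 = 0 := by omega
  have hdiff : n - (n - 2 * (j + 1)) = 2 * (j + 1) := by omega
  rw [dnk, if_pos hcond, hdiff]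
  have hdiv : 2 * (j + 1) / 2 = j + 1 := by omega
  rw [hdiv]
  have hmono : n.choose j ≤ n.choose (j + 1) :=
    Nat.choose_le_succ_of_lt_half_left (by omega)
  have hkey := ballot_key n j h
  have h2 : (n + 1) * (n.choose (j + 1) - n.choose j) + (n + 1) * n.choose j
      = (n + 1) * n.choose (j + 1) := by
    rw [← Nat.mul_add, Nat.sub_add_cancel hmono]
  have h3 : (n - 2 * (j + 1) + 1) * (n + 1).choose (j + 1)
      = (n + 1) * (n.choose (j + 1) - n.choose j) :=
    Nat.add_right_cancel (hkey.trans h2.symm)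
  rw [h3, Nat.mul_div_cancel_left _ (Nat.succ_pos n)]

/-- **Corollary 4.4 (exact form).** The total mid-height of all symmetric Dyck paths of
length `2n` is `∑_{k=0}^n k·d_{n,k} = 2^n - C(n, ⌊n/2⌋)`. -/
theorem total_midheight (n : ℕ) :
    ∑ k ∈ Finset.range (n + 1), k * dnk n k = 2 ^ n - Nat.choose n (n / 2) := by
  set m := n / 2 with hm
  -- reindex the sum via k = n - 2j
  have hinj : ∀ x ∈ range (m + 1), ∀ y ∈ range (m + 1),
      n - 2 * x = n - 2 * y → x = y := by
    intro a ha b hb hab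
    rw [Finset.mem_range] at ha hb
    omega
  have himg : ∑ k ∈ Finset.range (n + 1), k * dnk n k
      = ∑ j ∈ range (m + 1), (n - 2 * j) * dnk n (n - 2 * j) := by
    have hsi := Finset.sum_image (s := range (m + 1)) (g := fun j => n - 2 * j)
      (f := fun k => k * dnk n k) hinj
    rw [← hsi]
    apply (Finset.sum_subset ?_ ?_).symm
    · intro k hk
      simp only [Finset.mem_image, Finset.mem_range] at hk ⊢
      obtain ⟨j, _, rfl⟩ := hk
      omega
    · intro k hk hk'
      simp only [Finset.mem_image, Finset.mem_range] at hk hk'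
      have hk0 : dnk n k = 0 := by
        rw [dnk, if_neg]
        rintro ⟨h1, h2⟩
        exact hk' ⟨(n - k) / 2, by omega, by omega⟩
      simp [hk0]
  rw [himg, Finset.sum_range_succ']
  simp only [Nat.mul_zero, Nat.sub_zero, dnk_self, Nat.mul_one]
  have hval : ∀ j ∈ range m, (n - 2 * (j + 1)) * dnk n (n - 2 * (j + 1))
      = (n - 2 * (j + 1)) * (n.choose (j + 1) - n.choose j) := by
    intro j hj
    rw [Finset.mem_range] at hj
    rw [dnk_val n j (by omega)]
  rw [Finset.sum_congr rfl hval]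
  have hle : n.choose m ≤ 2 ^ n := by
    calc n.choose m ≤ ∑ i ∈ range (n + 1), n.choose i :=
          Finset.single_le_sum (f := fun i => n.choose i) (fun _ _ => Nat.zero_le _)
            (by rw [Finset.mem_range]; omega)
      _ = 2 ^ n := Nat.sum_range_choose n
  have hmain : (∑ j ∈ range m, (n - 2 * (j + 1)) * (n.choose (j + 1) - n.choose j)) + n
      + n.choose m = 2 ^ n := by
    have hcast : ∀ j ∈ range m,
        ((n - 2 * (j + 1) : ℕ) : ℤ) * ((n.choose (j + 1) - n.choose j : ℕ) : ℤ)
        = ((n : ℤ) - 2 * ((j : ℤ) + 1)) * ((n.choose (j + 1) : ℤ) - (n.choose j : ℤ)) := by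
      intro j hj
      rw [Finset.mem_range] at hj
      have h1 : 2 * (j + 1) ≤ n := by omega
      have h2 : n.choose j ≤ n.choose (j + 1) :=
        Nat.choose_le_succ_of_lt_half_left (by omega)
      rw [Nat.cast_sub h1, Nat.cast_sub h2]
      push_cast
      ring
    have htel := telescope_aux (n : ℤ) (fun j => (n.choose j : ℤ)) m
    simp only [Nat.choose_zero_right, Nat.cast_one, mul_one] at htel
    zify
    rw [Finset.sum_congr rfl hcast]
    have hgoal : ((n : ℤ) - 2 * m) * (n.choose m : ℤ)
        + 2 * (∑ j ∈ range m, (n.choose j : ℤ)) + (n.choose m : ℤ) = 2 ^ n := by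
      rcases Nat.even_or_odd n with he | ho
      · obtain ⟨k, hk⟩ := he
        have hn : n = 2 * m := by omega
        have hev := congrArg (Nat.cast : ℕ → ℤ) (even_halfway m)
        push_cast at hev
        have hz : ((n : ℤ) - 2 * m) = 0 := by rw [hn]; push_cast; ring
        rw [hz, zero_mul, zero_add, hn]
        linarith [hev]
      · have hn : n = 2 * m + 1 := by
          rcases ho with ⟨k, hk⟩; omega
        have hodd := Nat.sum_range_choose_halfway m
        rw [← hn, Finset.sum_range_succ] at hodd
        have hoz := congrArg (Nat.cast : ℕ → ℤ) hodd
        push_cast at hoz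
        rw [hn] at hoz
        have h1 : ((n : ℤ) - 2 * m) = 1 := by rw [hn]; push_cast; ring
        rw [h1, one_mul, hn]
        rw [pow_succ]
        have h4 : ((4 : ℤ)) ^ m = 2 ^ (2 * m) := by rw [pow_mul]; norm_num
        linarith [hoz, h4]
    linarith [htel, hgoal]
  omega
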